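/- In the algebra B_d, for all nonnegative integers a, b, c with a+b+c = d+1, one has f^(a)·binom(H2,b)·e^(c) = Σ_{k=1}^{min(a,c)} (-1)^{k-1} binom(b+k,k) f^(a-k)·binom(H2,b+k)·e^(c-k), where x^(m)=x^m/m! denotes divided powers. -/

import Mathlib

/-- The divided power `x^(m) = x^m / m!` in a `ℚ`-algebra. -/
noncomputable def dpow {A : Type*} [Ring A] [Algebra ℚ A] (x : A) (m : ℕ) : A :=
  ((m.factorial : ℚ)⁻¹) • x ^ m

/-- The binomial-coefficient element `binom(x, m) = x(x-1)⋯(x-m+1)/m!` of a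
`ℚ`-algebra. -/
noncomputable def abinom {A : Type*} [Ring A] [Algebra ℚ A] (x : A) (m : ℕ) : A :=
  ((m.factorial : ℚ)⁻¹) • ((List.range m).map (fun i : ℕ => x - (i : A))).prod

namespace BdAux

/-- coefficient `(-1)^k k! C(a,k) C(c,k)` -/
def gam (a c k : ℕ) : ℚ := (-1)^k * k.factorial * a.choose k * c.choose k

@[simp] lemma gam_zero (a c : ℕ) : gam a c 0 = 1 := by simp [gam]

lemma gam_eq_zero_left {a c k : ℕ} (h : a < k) : gam a c k = 0 := by
  simp [gam, Nat.choose_eq_zero_of_lt h]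

lemma gam_eq_zero_right {a c k : ℕ} (h : c < k) : gam a c k = 0 := by
  simp [gam, Nat.choose_eq_zero_of_lt h]

/-- `(j+1) C(a,j+1) = (a-j) C(a,j)` over ℚ with true subtraction. -/
lemma chooseQ (a j : ℕ) :
    ((j : ℚ) + 1) * (a.choose (j+1) : ℚ) = ((a : ℚ) - j) * (a.choose j : ℚ) := by
  rcases le_or_gt j a with h | h
  · have h1 := Nat.choose_succ_right_eq a j
    have h2 : ((a.choose (j+1) * (j+1) : ℕ) : ℚ) = ((a.choose j * (a - j) : ℕ) : ℚ) := by
      exact_mod_cast congrArg (Nat.cast (R := ℚ)) h1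
    push_cast [Nat.cast_sub h] at h2
    linarith [h2]
  · rw [Nat.choose_eq_zero_of_lt h, Nat.choose_eq_zero_of_lt (lt_trans h (Nat.lt_succ_self j))]
    simp

/-- `(c+1-k) C(c+1,k) = (c+1) C(c,k)` in ℕ. -/
lemma chooseN (c k : ℕ) :
    (c + 1).choose k * (c + 1 - k) = (c+1) * c.choose k := by
  calc (c + 1).choose k * (c + 1 - k) = (c+1).choose (k+1) * (k+1) :=
        (Nat.choose_succ_right_eq (c+1) k).symm
    _ = (c+1) * c.choose k := (Nat.add_one_mul_choose_eq c k).symm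

/-- the key scalar identity -/
lemma scalar_key (a b c j : ℕ) :
    ((b:ℚ)+1) * gam (a+1) (c+1) (j+1) =
      gam a (c+1) (j+1) * ((b:ℚ)+2+j)
        + gam a (c+1) j * (((c+1-j : ℕ) : ℚ)) * ((a:ℚ)-b-j-1) := by
  have fY : (((c+1-j : ℕ)) : ℚ) * ((c+1).choose j : ℚ)
      = ((j:ℚ)+1) * ((c+1).choose (j+1) : ℚ) := by
    have h1 := Nat.choose_succ_right_eq (c+1) j
    have h2 : (((c+1).choose (j+1) * (j+1) : ℕ) : ℚ) = (((c+1).choose j * (c+1-j) : ℕ) : ℚ) :=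
      congrArg _ h1
    push_cast at h2
    linarith
  have fX := chooseQ a j
  have fP : ((a+1).choose (j+1) : ℚ) = (a.choose j : ℚ) + (a.choose (j+1) : ℚ) := by
    exact_mod_cast congrArg (Nat.cast (R := ℚ)) (Nat.choose_succ_succ' a j)
  simp only [gam, fP, Nat.factorial_succ]
  push_cast
  linear_combination (-(-1:ℚ)^j * (j.factorial : ℚ) * ((a.choose j : ℚ)) * ((a:ℚ)-b-j-1)) * fY
    + ((-1:ℚ)^j * ((j:ℚ)+1) * (j.factorial : ℚ) * (((c+1).choose (j+1) : ℚ))) * fX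
section Str
variable {A : Type*} [Ring A] [Algebra ℚ A]

/-- Context for `B_d` computations. -/
structure Bd (A : Type*) [Ring A] [Algebra ℚ A] where
  e : A
  f : A
  H : A
  d : ℕ
  hHe : H * e = e * H - e
  hHf : H * f = f * H + f
  hef : e * f = f * e + ((d : A) - 2 * H)
  hmin : ((List.range (d+1)).map (fun i : ℕ => H - (i : A))).prod = 0

namespace Bd
variable (Γ : Bd A)

/-- `∏_{i<p} (H - i)` -/
def Bp (p : ℕ) : A := ((List.range p).map (fun i : ℕ => Γ.H - (i : A))).prod
/-- `∏_{i<p} (H + 1 - i)` -/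
def Bm (p : ℕ) : A := ((List.range p).map (fun i : ℕ => Γ.H + 1 - (i : A))).prod

lemma Bp_succ (p : ℕ) : Γ.Bp (p+1) = Γ.Bp p * (Γ.H - (p : A)) := by
  simp [Bp, List.range_succ]

lemma Bm_succ (p : ℕ) : Γ.Bm (p+1) = Γ.Bm p * (Γ.H + 1 - (p : A)) := by
  simp [Bm, List.range_succ]

@[simp] lemma Bp_zero : Γ.Bp 0 = 1 := by simp [Bp]
@[simp] lemma Bm_zero : Γ.Bm 0 = 1 := by simp [Bm]

lemma Bm_succ' (p : ℕ) : Γ.Bm (p+1) = (Γ.H + 1) * Γ.Bp p := by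
  rw [Bm, List.range_succ_eq_map, List.map_cons, List.prod_cons, List.map_map]
  have h1 : (Γ.H + 1 - ((0:ℕ) : A)) = Γ.H + 1 := by simp
  rw [h1, Bp]
  have h2 : List.map ((fun i : ℕ => Γ.H + 1 - (i:A)) ∘ Nat.succ) (List.range p)
      = List.map (fun i : ℕ => Γ.H - (i:A)) (List.range p) := by
    apply List.map_congr_left
    intro i _
    show Γ.H + 1 - ((i+1 : ℕ) : A) = Γ.H - (i : A)
    push_cast
    abel
  rw [h2]

lemma H_Bp (p : ℕ) : Γ.H * Γ.Bp p = Γ.Bp p * Γ.H := by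
  induction p with
  | zero => simp
  | succ p ih =>
      have hc : Γ.H * (Γ.H - (p:A)) = (Γ.H - (p:A)) * Γ.H := by
        rw [mul_sub, sub_mul, (Nat.cast_commute (p:ℕ) Γ.H).eq]
      rw [Bp_succ, ← mul_assoc, ih, mul_assoc, hc, ← mul_assoc]

lemma natCast_smul_eq (n : ℕ) (x : A) : ((n : ℚ)) • x = (n : A) * x := by
  rw [Algebra.smul_def, map_natCast]

lemma cast_comm_Bp (q : ℚ) (p : ℕ) :
    algebraMap ℚ A q * Γ.Bp p = Γ.Bp p * algebraMap ℚ A q := (Algebra.commutes q _)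

lemma Bm_sub_Bp (p : ℕ) : Γ.Bm (p+1) - Γ.Bp (p+1) = (((p:ℚ)+1)) • Γ.Bp p := by
  have hc : Γ.Bp p * (Γ.H - (p:A)) = (Γ.H - (p:A)) * Γ.Bp p := by
    rw [sub_mul, mul_sub, H_Bp, (Nat.cast_commute (p:ℕ) (Γ.Bp p)).eq]
  have h : (((p:ℚ)+1)) • Γ.Bp p = ((p:A)+1) * Γ.Bp p := by
    rw [Algebra.smul_def]
    congr 1
    push_cast
    ring
  rw [Bm_succ', Bp_succ, hc, h]
  noncomm_ring

lemma Bp_mul_f (p : ℕ) : Γ.Bp p * Γ.f = Γ.f * Γ.Bm p := by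
  induction p with
  | zero => simp
  | succ p ih =>
      have hlin : (Γ.H - (p:A)) * Γ.f = Γ.f * (Γ.H + 1 - (p:A)) := by
        rw [sub_mul, Γ.hHf, (Nat.cast_commute (p:ℕ) Γ.f).eq]
        noncomm_ring
      rw [Bp_succ, Bm_succ, mul_assoc, hlin, ← mul_assoc, ih, mul_assoc]

lemma e_mul_Bp (p : ℕ) : Γ.e * Γ.Bp p = Γ.Bm p * Γ.e := by
  induction p with
  | zero => simp
  | succ p ih =>
      have he : Γ.e * Γ.H = Γ.H * Γ.e + Γ.e := by rw [Γ.hHe]; abel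
      have hlin : Γ.e * (Γ.H - (p:A)) = (Γ.H + 1 - (p:A)) * Γ.e := by
        rw [mul_sub, he, (Nat.cast_commute (p:ℕ) Γ.e).eq.symm]
        noncomm_ring
      rw [Bp_succ, Bm_succ, ← mul_assoc, ih, mul_assoc, hlin, ← mul_assoc]

/-- `e^j * f = f * e^j + j • ((d - 2H - (j-1)) * e^(j-1))` -/
lemma pow_e_mul_f (j : ℕ) :
    Γ.e^j * Γ.f = Γ.f * Γ.e^j
      + ((j:ℚ)) • ((((Γ.d) : A) - 2 * Γ.H - ((j-1 : ℕ) : A)) * Γ.e^(j-1)) := by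
  induction j with
  | zero => simp
  | succ m ih =>
      have he : Γ.e * Γ.H = Γ.H * Γ.e + Γ.e := by rw [Γ.hHe]; abel
      rw [pow_succ', mul_assoc, ih, mul_add, ← mul_assoc, Γ.hef, mul_smul_comm]
      rcases m with _ | n
      · simp
      · have hstep : Γ.e * ((((Γ.d) : A) - 2 * Γ.H - ((n+1-1 : ℕ) : A)) * Γ.e^(n+1-1))
            = ((((Γ.d) : A) - 2 * Γ.H - (n : A) - 2) * Γ.e^(n+1)) := by
          have h1 : Γ.e * (((Γ.d) : A) - 2 * Γ.H - (n : A))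
              = ((((Γ.d) : A) - 2 * Γ.H - (n : A) - 2)) * Γ.e := by
            rw [mul_sub, mul_sub, show Γ.e*(2*Γ.H) = 2*(Γ.e*Γ.H) from by rw [← mul_assoc, ← mul_assoc, (Commute.ofNat_right Γ.e 2).eq],
              he, (Nat.cast_commute (n:ℕ) Γ.e).eq.symm,
              (Nat.cast_commute (Γ.d:ℕ) Γ.e).eq.symm]
            noncomm_ring
          have h2 : (n+1-1 : ℕ) = n := rfl
          rw [h2, ← mul_assoc, h1, mul_assoc, ← pow_succ']
        rw [hstep]
        have h3 : ((n+1+1-1 : ℕ)) = n+1 := rfl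
        rw [h3]
        have hgoal : ((((Γ.d) : A) - 2 * Γ.H) * Γ.e^(n+1))
              + (((n+1:ℕ):ℚ)) • ((((Γ.d) : A) - 2 * Γ.H - (n:A) - 2) * Γ.e^(n+1))
            = (((n+1+1:ℕ):ℚ)) • ((((Γ.d) : A) - 2 * Γ.H - ((n+1:ℕ):A)) * Γ.e^(n+1)) := by
          have c1 : ((Γ.d:A)) * Γ.e^(n+1) = ((Γ.d:ℚ)) • Γ.e^(n+1) :=
            (natCast_smul_eq Γ.d _).symm
          have c2 : ((n:A)) * Γ.e^(n+1) = ((n:ℚ)) • Γ.e^(n+1) :=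
            (natCast_smul_eq n _).symm
          push_cast
          simp only [sub_mul, add_mul, one_mul, mul_assoc, two_mul, c1, c2]
          module
        rw [add_mul, mul_assoc, ← pow_succ', add_assoc, hgoal]
lemma termf (i p j : ℕ) :
    (Γ.f^i * Γ.Bp p * Γ.e^j) * Γ.f
      = Γ.f^(i+1) * Γ.Bm p * Γ.e^j
        + ((j:ℚ)) • (Γ.f^i * (Γ.Bp p * (((Γ.d:A) - 2*Γ.H - ((j-1:ℕ):A)))) * Γ.e^(j-1)) := by
  have h1 : (Γ.f^i * Γ.Bp p) * (Γ.f * Γ.e^j) = Γ.f^(i+1) * Γ.Bm p * Γ.e^j := by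
    rw [← mul_assoc, mul_assoc (Γ.f^i), Bp_mul_f, ← mul_assoc, ← pow_succ, mul_assoc]
  have h2 : (Γ.f^i * Γ.Bp p) * ((((Γ.d:A) - 2*Γ.H - ((j-1:ℕ):A))) * Γ.e^(j-1))
      = Γ.f^i * (Γ.Bp p * (((Γ.d:A) - 2*Γ.H - ((j-1:ℕ):A)))) * Γ.e^(j-1) := by
    noncomm_ring
  calc (Γ.f^i * Γ.Bp p * Γ.e^j) * Γ.f
      = (Γ.f^i * Γ.Bp p) * (Γ.e^j * Γ.f) := by rw [mul_assoc]
    _ = (Γ.f^i * Γ.Bp p) * (Γ.f * Γ.e^j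
          + ((j:ℚ)) • ((((Γ.d:A) - 2*Γ.H - ((j-1:ℕ):A))) * Γ.e^(j-1))) := by
        rw [pow_e_mul_f]
    _ = (Γ.f^i * Γ.Bp p) * (Γ.f * Γ.e^j)
          + ((j:ℚ)) • ((Γ.f^i * Γ.Bp p) * ((((Γ.d:A) - 2*Γ.H - ((j-1:ℕ):A))) * Γ.e^(j-1))) := by
        rw [mul_add, mul_smul_comm]
    _ = _ := by rw [h1, h2]

lemma Bp_hA (p m : ℕ) :
    Γ.Bp p * ((Γ.d:A) - 2*Γ.H - (m:A))
      = ((-2:ℚ)) • Γ.Bp (p+1) + (((Γ.d:ℚ) - ((m:ℕ):ℚ) - 2*((p:ℕ):ℚ))) • Γ.Bp p := by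
  rw [Bp_succ]
  rw [← mul_smul_comm, Algebra.smul_def ((Γ.d:ℚ) - ((m:ℕ):ℚ) - 2*((p:ℕ):ℚ)),
    Algebra.commutes, ← mul_add]
  congr 1
  have : algebraMap ℚ A ((Γ.d:ℚ) - ((m:ℕ):ℚ) - 2*((p:ℕ):ℚ))
      = ((Γ.d:A) - (m:A) - 2*(p:A)) := by
    rw [map_sub, map_sub, map_mul, map_natCast, map_natCast, map_natCast, map_ofNat]
  rw [this]
  have h2 : ((-2:ℚ)) • (Γ.H - (p:A)) = (-2:A) * (Γ.H - (p:A)) := by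
    rw [Algebra.smul_def, map_neg, map_ofNat]
  rw [h2]
  noncomm_ring

/-- main per-term commutation identity (free; no constraint needed) -/
lemma term_comm (a b c k : ℕ) :
    (Γ.f^(a-k) * Γ.Bp (b+1+k) * Γ.e^(c+1-k)) * Γ.f
      - Γ.f * (Γ.f^(a-k) * Γ.Bp (b+1+k) * Γ.e^(c+1-k))
    = ((((b+k:ℕ):ℚ))+1) • (Γ.f^(a-k+1) * Γ.Bp (b+k) * Γ.e^(c+1-k))
      + (((c+1-k:ℕ):ℚ) * ((Γ.d:ℚ) - ((c-k:ℕ):ℚ) - 2*((b+1+k:ℕ):ℚ)))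
          • (Γ.f^(a-k) * Γ.Bp (b+1+k) * Γ.e^(c-k))
      + (((c+1-k:ℕ):ℚ) * (-2)) • (Γ.f^(a-k) * Γ.Bp (b+2+k) * Γ.e^(c-k)) := by
  have hidx : c+1-k-1 = c-k := by omega
  have hfT : Γ.f * (Γ.f^(a-k) * Γ.Bp (b+1+k) * Γ.e^(c+1-k))
      = Γ.f^(a-k+1) * Γ.Bp (b+1+k) * Γ.e^(c+1-k) := by
    rw [← mul_assoc, ← mul_assoc, ← pow_succ']
  rw [termf, hfT, hidx]
  rw [Γ.Bp_hA (b+1+k) (c-k)]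
  have hidx2 : b+1+k+1 = b+2+k := by omega
  rw [hidx2]
  have hidx3 : b+1+k = (b+k)+1 := by omega
  have hcomb : Γ.f^(a-k+1) * Γ.Bm (b+1+k) * Γ.e^(c+1-k)
        - Γ.f^(a-k+1) * Γ.Bp (b+1+k) * Γ.e^(c+1-k)
      = ((((b+k:ℕ):ℚ))+1) • (Γ.f^(a-k+1) * Γ.Bp (b+k) * Γ.e^(c+1-k)) := by
    rw [← sub_mul, ← mul_sub, hidx3, Bm_sub_Bp, mul_smul_comm, smul_mul_assoc]
  have hdist : Γ.f^(a-k) * (((-2:ℚ)) • Γ.Bp (b+2+k)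
        + (((Γ.d:ℚ) - ((c-k:ℕ):ℚ) - 2*((b+1+k:ℕ):ℚ))) • Γ.Bp (b+1+k)) * Γ.e^(c-k)
      = ((-2:ℚ)) • (Γ.f^(a-k) * Γ.Bp (b+2+k) * Γ.e^(c-k))
        + (((Γ.d:ℚ) - ((c-k:ℕ):ℚ) - 2*((b+1+k:ℕ):ℚ)))
            • (Γ.f^(a-k) * Γ.Bp (b+1+k) * Γ.e^(c-k)) := by
    rw [mul_add, add_mul, mul_smul_comm, mul_smul_comm, smul_mul_assoc, smul_mul_assoc]
  rw [hdist]
  rw [smul_add, smul_smul, smul_smul]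
  rw [add_sub_right_comm, hcomb]
  rw [mul_comm (((c+1-k:ℕ):ℚ)) (-2), ← mul_comm (((c+1-k:ℕ):ℚ)) _]
  abel
/-- the element `Σ_k (-1)^k k! C(a,k) C(c,k) f^{a-k} Bp(b+k) e^{c-k}` -/
noncomputable def Sel (a b c : ℕ) : A :=
  ∑ k ∈ Finset.range (c+1), gam a c k • (Γ.f^(a-k) * Γ.Bp (b+k) * Γ.e^(c-k))

lemma key (a b c : ℕ) (hd : a + b + c + 2 = Γ.d + 1) :
    ((b:ℚ)+1) • Γ.Sel (a+1) b (c+1)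
      = Γ.Sel a (b+1) (c+1) * Γ.f - Γ.f * Γ.Sel a (b+1) (c+1)
        + ((2*((c:ℚ)+1))) • Γ.Sel a (b+2) c := by
  have hdQ : (Γ.d:ℚ) = (a:ℚ) + b + c + 1 := by
    have h := congrArg (fun n : ℕ => (n : ℚ)) hd
    push_cast at h
    linarith
  -- expansion of the commutator
  have expand : Γ.Sel a (b+1) (c+1) * Γ.f - Γ.f * Γ.Sel a (b+1) (c+1)
      = (∑ k ∈ Finset.range (c+2),
          (gam a (c+1) k * ((((b+k:ℕ):ℚ))+1)) • (Γ.f^(a-k+1) * Γ.Bp (b+k) * Γ.e^(c+1-k)))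
        + (∑ k ∈ Finset.range (c+2),
            (gam a (c+1) k * (((c+1-k:ℕ):ℚ) * ((Γ.d:ℚ) - ((c-k:ℕ):ℚ) - 2*((b+1+k:ℕ):ℚ))))
              • (Γ.f^(a-k) * Γ.Bp (b+1+k) * Γ.e^(c-k)))
        + (∑ k ∈ Finset.range (c+2),
            (gam a (c+1) k * (((c+1-k:ℕ):ℚ) * (-2)))
              • (Γ.f^(a-k) * Γ.Bp (b+2+k) * Γ.e^(c-k))) := by
    rw [Sel, Finset.sum_mul, Finset.mul_sum, ← Finset.sum_sub_distrib,
      ← Finset.sum_add_distrib, ← Finset.sum_add_distrib]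
    apply Finset.sum_congr rfl
    intro k _
    rw [smul_mul_assoc, mul_smul_comm, ← smul_sub, Γ.term_comm a b c k,
      smul_add, smul_add, smul_smul, smul_smul, smul_smul]
  -- the B-batch cancels against `2(c+1) • Sel a (b+2) c`
  have hSB : (∑ k ∈ Finset.range (c+2),
        (gam a (c+1) k * (((c+1-k:ℕ):ℚ) * (-2)))
          • (Γ.f^(a-k) * Γ.Bp (b+2+k) * Γ.e^(c-k)))
      + ((2*((c:ℚ)+1))) • Γ.Sel a (b+2) c = 0 := by
    rw [Sel, Finset.smul_sum]
    rw [Finset.sum_range_succ _ (c+1)]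
    have hz : (gam a (c+1) (c+1) * (((c+1-(c+1):ℕ):ℚ) * (-2)))
        • (Γ.f^(a-(c+1)) * Γ.Bp (b+2+(c+1)) * Γ.e^(c-(c+1))) = 0 := by
      simp
    rw [hz, add_zero, ← Finset.sum_add_distrib]
    apply Finset.sum_eq_zero
    intro k _
    rw [smul_smul, ← add_smul]
    convert zero_smul ℚ _
    have hcast : (((c+1).choose k : ℚ)) * (((c+1-k:ℕ):ℚ)) = ((c:ℚ)+1) * ((c.choose k : ℚ)) := by
      have h := congrArg (Nat.cast (R := ℚ)) (chooseN c k)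
      push_cast at h
      linarith
    simp only [gam]
    push_cast
    linear_combination ((-2:ℚ) * (-1:ℚ)^k * (k.factorial:ℚ) * ((a.choose k : ℚ))) * hcast
  -- the A- and D-batches build `(b+1) • Sel (a+1) b (c+1)`
  have hSA : ((b:ℚ)+1) • Γ.Sel (a+1) b (c+1)
      = (∑ k ∈ Finset.range (c+2),
          (gam a (c+1) k * ((((b+k:ℕ):ℚ))+1)) • (Γ.f^(a-k+1) * Γ.Bp (b+k) * Γ.e^(c+1-k)))
        + (∑ k ∈ Finset.range (c+2),
            (gam a (c+1) k * (((c+1-k:ℕ):ℚ) * ((Γ.d:ℚ) - ((c-k:ℕ):ℚ) - 2*((b+1+k:ℕ):ℚ))))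
              • (Γ.f^(a-k) * Γ.Bp (b+1+k) * Γ.e^(c-k))) := by
    have hL : ((b:ℚ)+1) • Γ.Sel (a+1) b (c+1)
        = (∑ k ∈ Finset.range (c+1),
            (((b:ℚ)+1) * gam (a+1) (c+1) (k+1))
              • (Γ.f^(a+1-(k+1)) * Γ.Bp (b+(k+1)) * Γ.e^(c+1-(k+1))))
          + (((b:ℚ)+1) * gam (a+1) (c+1) 0) • (Γ.f^(a+1-0) * Γ.Bp (b+0) * Γ.e^(c+1-0)) := by
      rw [Sel, Finset.smul_sum]
      simp only [smul_smul]
      exact Finset.sum_range_succ' _ (c+1)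
    have hA : (∑ k ∈ Finset.range (c+2),
          (gam a (c+1) k * ((((b+k:ℕ):ℚ))+1)) • (Γ.f^(a-k+1) * Γ.Bp (b+k) * Γ.e^(c+1-k)))
        = (∑ k ∈ Finset.range (c+1),
            (gam a (c+1) (k+1) * ((((b+(k+1):ℕ):ℚ))+1))
              • (Γ.f^(a-(k+1)+1) * Γ.Bp (b+(k+1)) * Γ.e^(c+1-(k+1))))
          + (gam a (c+1) 0 * ((((b+0:ℕ):ℚ))+1)) • (Γ.f^(a-0+1) * Γ.Bp (b+0) * Γ.e^(c+1-0)) :=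
      Finset.sum_range_succ' _ (c+1)
    have hD2 : (∑ k ∈ Finset.range (c+2),
          (gam a (c+1) k * (((c+1-k:ℕ):ℚ) * ((Γ.d:ℚ) - ((c-k:ℕ):ℚ) - 2*((b+1+k:ℕ):ℚ))))
            • (Γ.f^(a-k) * Γ.Bp (b+1+k) * Γ.e^(c-k)))
        = (∑ k ∈ Finset.range (c+1),
            (gam a (c+1) k * (((c+1-k:ℕ):ℚ) * ((Γ.d:ℚ) - ((c-k:ℕ):ℚ) - 2*((b+1+k:ℕ):ℚ))))
              • (Γ.f^(a-k) * Γ.Bp (b+1+k) * Γ.e^(c-k))) := by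
      rw [Finset.sum_range_succ]
      have hzt : (gam a (c+1) (c+1) * (((c+1-(c+1):ℕ):ℚ)
            * ((Γ.d:ℚ) - ((c-(c+1):ℕ):ℚ) - 2*((b+1+(c+1):ℕ):ℚ))))
          • (Γ.f^(a-(c+1)) * Γ.Bp (b+1+(c+1)) * Γ.e^(c-(c+1))) = 0 := by
        simp
      rw [hzt, add_zero]
    have hmain : (∑ k ∈ Finset.range (c+1),
          (((b:ℚ)+1) * gam (a+1) (c+1) (k+1))
            • (Γ.f^(a+1-(k+1)) * Γ.Bp (b+(k+1)) * Γ.e^(c+1-(k+1))))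
        = (∑ k ∈ Finset.range (c+1),
            (gam a (c+1) (k+1) * ((((b+(k+1):ℕ):ℚ))+1))
              • (Γ.f^(a-(k+1)+1) * Γ.Bp (b+(k+1)) * Γ.e^(c+1-(k+1))))
          + (∑ k ∈ Finset.range (c+1),
              (gam a (c+1) k * (((c+1-k:ℕ):ℚ) * ((Γ.d:ℚ) - ((c-k:ℕ):ℚ) - 2*((b+1+k:ℕ):ℚ))))
                • (Γ.f^(a-k) * Γ.Bp (b+1+k) * Γ.e^(c-k))) := by
      rw [← Finset.sum_add_distrib]
      apply Finset.sum_congr rfl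
      intro j hj
      have hjc : j ≤ c := by
        have := Finset.mem_range.mp hj
        omega
      have i1 : a + 1 - (j+1) = a - j := by omega
      have i2 : c + 1 - (j+1) = c - j := by omega
      have i3 : b + 1 + j = b + (j+1) := by omega
      have i4 : (((c-j:ℕ)):ℚ) = (c:ℚ) - j := by
        rw [Nat.cast_sub hjc]
      have i5 : (((c+1-j:ℕ)):ℚ) = (c:ℚ) + 1 - j := by
        rw [Nat.cast_sub (by omega : j ≤ c+1)]
        push_cast
        ring
      rw [i1, i2, i3]
      by_cases hja : j < a
      · have i6 : a - (j+1) + 1 = a - j := by omega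
        rw [i6, ← add_smul]
        congr 1
        have sk := scalar_key a b c j
        rw [i5] at sk
        push_cast [i4, i5]
        push_cast at sk
        linear_combination sk - (gam a (c+1) j * ((c:ℚ)+1-j)) * hdQ
      · have hgz : gam a (c+1) (j+1) = 0 := gam_eq_zero_left (by omega)
        rw [hgz, zero_mul, zero_smul, zero_add]
        have hgz2 : ((b:ℚ)+1) * gam (a+1) (c+1) (j+1) * 1 = ((b:ℚ)+1) * gam (a+1) (c+1) (j+1) := by ring
        congr 1
        have sk := scalar_key a b c j
        rw [i5, hgz] at sk
        push_cast [i4, i5]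
        push_cast at sk
        linear_combination sk - (gam a (c+1) j * ((c:ℚ)+1-j)) * hdQ
    have h0 : (((b:ℚ)+1) * gam (a+1) (c+1) 0) • (Γ.f^(a+1-0) * Γ.Bp (b+0) * Γ.e^(c+1-0))
        = (gam a (c+1) 0 * ((((b+0:ℕ):ℚ))+1)) • (Γ.f^(a-0+1) * Γ.Bp (b+0) * Γ.e^(c+1-0)) := by
      simp [gam]
    rw [hL, hA, hD2, hmain, h0]
    abel
  rw [expand, hSA, add_assoc, hSB, add_zero]
lemma Bp_top : Γ.Bp (Γ.d + 1) = 0 := Γ.hmin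

/-- base case: `Bp b * e^c = 0` when `b + c = d + 1` -/
lemma baseE : ∀ c b : ℕ, b + c = Γ.d + 1 → Γ.Bp b * Γ.e^c = 0 := by
  intro c
  induction c with
  | zero =>
      intro b hb
      have hbd : b = Γ.d + 1 := by omega
      subst hbd
      rw [pow_zero, mul_one, Bp_top]
  | succ c ih =>
      intro b hb
      have h0 : Γ.Bp (b+1) * Γ.e^c = 0 := ih (b+1) (by omega)
      have r1 : Γ.Bp (b+1) * Γ.e^(c+1) = 0 := by
        rw [pow_succ, ← mul_assoc, h0, zero_mul]
      have r2 : Γ.Bm (b+1) * Γ.e^(c+1) = 0 := by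
        have h := congrArg (fun x => Γ.e * x) h0
        simp only [mul_zero] at h
        rw [← mul_assoc, Γ.e_mul_Bp, mul_assoc, ← pow_succ'] at h
        exact h
      have hsub := congrArg (fun x => x * Γ.e^(c+1)) (Γ.Bm_sub_Bp b)
      rw [sub_mul, r1, r2, smul_mul_assoc, sub_zero] at hsub
      have hz := hsub.symm
      rcases smul_eq_zero.mp hz with h1 | h2
      · exfalso
        have : (0:ℚ) < (b:ℚ) + 1 := by positivity
        rw [h1] at this
        exact lt_irrefl _ this
      · exact h2

/-- base case: `f^a * Bp b = 0` when `a + b = d + 1` -/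
lemma baseF : ∀ a b : ℕ, a + b = Γ.d + 1 → Γ.f^a * Γ.Bp b = 0 := by
  intro a
  induction a with
  | zero =>
      intro b hb
      have hbd : b = Γ.d + 1 := by omega
      subst hbd
      rw [pow_zero, one_mul, Bp_top]
  | succ a ih =>
      intro b hb
      have h0 : Γ.f^a * Γ.Bp (b+1) = 0 := ih (b+1) (by omega)
      have r1 : Γ.f^(a+1) * Γ.Bp (b+1) = 0 := by
        have h := congrArg (fun x => Γ.f * x) h0
        simp only [mul_zero] at h
        rw [← mul_assoc, ← pow_succ'] at h
        exact h
      have r2 : Γ.f^(a+1) * Γ.Bm (b+1) = 0 := by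
        have h := congrArg (fun x => x * Γ.f) h0
        simp only [zero_mul] at h
        rw [mul_assoc, Γ.Bp_mul_f, ← mul_assoc, ← pow_succ] at h
        exact h
      have hsub := congrArg (fun x => Γ.f^(a+1) * x) (Γ.Bm_sub_Bp b)
      rw [mul_sub, r1, r2, mul_smul_comm, sub_zero] at hsub
      have hz := hsub.symm
      rcases smul_eq_zero.mp hz with h1 | h2
      · exfalso
        have : (0:ℚ) < (b:ℚ) + 1 := by positivity
        rw [h1] at this
        exact lt_irrefl _ this
      · exact h2

lemma Sel_a0 (b c : ℕ) : Γ.Sel 0 b c = Γ.Bp b * Γ.e^c := by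
  rw [Sel, Finset.sum_eq_single 0]
  · simp
  · intro k _ hk0
    rw [gam_eq_zero_left (Nat.pos_of_ne_zero hk0), zero_smul]
  · intro h0
    exact absurd (Finset.mem_range.mpr (by omega)) h0

lemma Sel_c0 (a b : ℕ) : Γ.Sel a b 0 = Γ.f^a * Γ.Bp b := by
  rw [Sel, Finset.sum_range_one]
  simp

lemma main : ∀ a b c : ℕ, a + b + c = Γ.d + 1 → Γ.Sel a b c = 0 := by
  intro a
  induction a with
  | zero =>
      intro b c h
      rw [Sel_a0]
      exact Γ.baseE c b (by omega)
  | succ a ih =>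
      intro b c h
      cases c with
      | zero =>
          rw [Sel_c0]
          exact Γ.baseF (a+1) b (by omega)
      | succ c =>
          have hk := Γ.key a b c (by omega)
          rw [ih (b+1) (c+1) (by omega), ih (b+2) c (by omega)] at hk
          simp only [mul_zero, zero_mul, sub_zero, smul_zero, zero_sub, add_zero, neg_zero,
            sub_self] at hk
          rcases smul_eq_zero.mp hk with h1 | h2
          · exfalso
            have hpos : (0:ℚ) < (b:ℚ) + 1 := by positivity
            rw [h1] at hpos
            exact lt_irrefl _ hpos
          · exact h2
end Bd

lemma neg_prod {A : Type*} [Ring A] (g : ℕ → A) :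
    ∀ n : ℕ, ((List.range n).map (fun i => -(g i))).prod
      = ((-1:ℤ)^n) • ((List.range n).map g).prod := by
  intro n
  induction n with
  | zero => simp
  | succ n ih =>
      rw [List.range_succ, List.map_append, List.prod_append, List.map_append,
        List.prod_append, ih]
      simp [pow_succ, mul_smul, smul_mul_assoc, mul_neg, smul_neg, mul_assoc]

lemma prod_reflect {A : Type*} [Ring A] (g : ℕ → A) (hg : ∀ i j, Commute (g i) (g j)) :
    ∀ n : ℕ, ((List.range n).map (fun i => g (n-1-i))).prod = ((List.range n).map g).prod := by
  intro n
  induction n with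
  | zero => simp
  | succ n ih =>
      conv_lhs => rw [List.range_succ_eq_map]
      rw [List.map_cons, List.prod_cons, List.map_map]
      have h1 : ((List.range n).map ((fun i => g (n+1-1-i)) ∘ Nat.succ))
          = ((List.range n).map (fun i => g (n-1-i))) := by
        apply List.map_congr_left
        intro i _
        show g (n+1-1-(i+1)) = g (n-1-i)
        congr 1
        omega
      have h2 : n+1-1-0 = n := by omega
      rw [h1, h2, ih]
      have hcomm : Commute (g n) (((List.range n).map g).prod) := by
        apply Commute.list_prod_right
        intro y hy
        obtain ⟨i, _, rfl⟩ := List.mem_map.mp hy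
        exact hg n i
      rw [hcomm.eq]
      conv_rhs => rw [List.range_succ]
      rw [List.map_append, List.prod_append]
      simp

end Str

end BdAux
open BdAux in
theorem Bd_reduction_base (d : ℕ) (A : Type*) [Ring A] [Algebra ℚ A]
    (e f H1 H2 : A)
    (h12 : H1 * H2 = H2 * H1)
    (h1e : H1 * e - e * H1 = e) (h1f : H1 * f - f * H1 = -f)
    (h2e : H2 * e - e * H2 = -e) (h2f : H2 * f - f * H2 = f)
    (hef : e * f - f * e = H1 - H2)
    (hsum : H1 + H2 = (d : A))
    (hmin : ((List.range (d + 1)).map (fun i : ℕ => H1 - (i : A))).prod = 0)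
    (a b c : ℕ) (habc : a + b + c = d + 1) :
    dpow f a * abinom H2 b * dpow e c =
      ∑ k ∈ Finset.Icc 1 (min a c),
        ((-1 : ℚ) ^ (k - 1) * ((b + k).choose k : ℚ)) •
          (dpow f (a - k) * abinom H2 (b + k) * dpow e (c - k)) := by
  have hH1 : H1 = (d : A) - H2 := by
    rw [← hsum]; abel
  -- convert hmin
  have hminH : ((List.range (d+1)).map (fun i : ℕ => H2 - (i : A))).prod = 0 := by
    have e1 : (List.range (d+1)).map (fun i : ℕ => H1 - (i : A))
        = (List.range (d+1)).map (fun i : ℕ => -(H2 - ((d-i : ℕ) : A))) := by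
      apply List.map_congr_left
      intro i hi
      have hid : i ≤ d := by
        have := List.mem_range.mp hi
        omega
      rw [hH1, Nat.cast_sub hid]
      abel
    rw [e1, neg_prod] at hmin
    have e2 : ((List.range (d+1)).map (fun i : ℕ => H2 - ((d-i : ℕ) : A))).prod
        = ((List.range (d+1)).map (fun j : ℕ => H2 - (j : A))).prod := by
      have hcomm : ∀ i j : ℕ, Commute (H2 - (i:A)) (H2 - (j:A)) := by
        intro i j
        exact ((Commute.refl H2).sub_right ((Nat.cast_commute (j:ℕ) H2).symm)).sub_left
          (Nat.cast_commute (i:ℕ) _)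
      exact prod_reflect (fun j => H2 - (j:A)) hcomm (d+1)
    rw [e2] at hmin
    have heven : ((-1:ℤ)^(d+1)) • (((-1:ℤ)^(d+1))
        • ((List.range (d+1)).map (fun j : ℕ => H2 - (j : A))).prod)
        = ((List.range (d+1)).map (fun j : ℕ => H2 - (j : A))).prod := by
      rw [smul_smul, ← pow_add]
      have : Even ((d+1) + (d+1)) := ⟨d+1, rfl⟩
      rw [this.neg_one_pow, one_smul]
    rw [← heven, hmin, smul_zero]
  -- build the context
  have hHe : H2 * e = e * H2 - e := by linear_combination (norm := abel) h2e
  have hHf : H2 * f = f * H2 + f := by linear_combination (norm := abel) h2f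
  have hef' : e * f = f * e + ((d : A) - 2 * H2) := by
    rw [hH1] at hef
    have h2 : (d:A) - 2 * H2 = (↑d - H2) - H2 := by noncomm_ring
    rw [h2, ← hef]
    noncomm_ring
  set Γ : Bd A :=
    { e := e
      f := f
      H := H2
      d := d
      hHe := hHe
      hHf := hHf
      hef := hef'
      hmin := hminH } with hΓ
  have hBp : ∀ p : ℕ, Γ.Bp p = ((List.range p).map (fun i : ℕ => H2 - (i : A))).prod :=
    fun p => rfl
  have hbody : ∀ i p j : ℕ, dpow f i * abinom H2 p * dpow e j
      = (((i.factorial:ℚ)⁻¹ * ((p.factorial:ℚ)⁻¹ * (j.factorial:ℚ)⁻¹)))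
          • (Γ.f^i * Γ.Bp p * Γ.e^j) := by
    intro i p j
    show _ = _ • (f^i * Γ.Bp p * e^j)
    rw [hBp, dpow, dpow, abinom]
    simp only [smul_mul_assoc, mul_smul_comm, smul_smul]
    congr 1
    ring
  have hmain := Γ.main a b c habc
  rw [Bd.Sel, Finset.sum_range_succ'] at hmain
  have h00 : gam a c 0 • (Γ.f^(a-0) * Γ.Bp (b+0) * Γ.e^(c-0)) = Γ.f^a * Γ.Bp b * Γ.e^c := by
    simp
  rw [h00] at hmain
  have hT0 : Γ.f^a * Γ.Bp b * Γ.e^c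
      = -∑ k ∈ Finset.range c, gam a c (k+1)
          • (Γ.f^(a-(k+1)) * Γ.Bp (b+(k+1)) * Γ.e^(c-(k+1))) :=
    eq_neg_of_add_eq_zero_right hmain
  -- normalize goal
  simp only [hbody]
  rw [hT0, smul_neg, Finset.smul_sum]
  simp only [smul_smul]
  rw [← Finset.sum_neg_distrib]
  simp only [← neg_smul]
  -- convert range-c sum to Icc 1 c
  have hIcc : ∑ k ∈ Finset.Icc 1 c,
        (-((a.factorial:ℚ)⁻¹ * ((b.factorial:ℚ)⁻¹ * (c.factorial:ℚ)⁻¹) * gam a c k))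
          • (Γ.f^(a-k) * Γ.Bp (b+k) * Γ.e^(c-k))
      = ∑ k ∈ Finset.range c,
          (-((a.factorial:ℚ)⁻¹ * ((b.factorial:ℚ)⁻¹ * (c.factorial:ℚ)⁻¹) * gam a c (1+k)))
            • (Γ.f^(a-(1+k)) * Γ.Bp (b+(1+k)) * Γ.e^(c-(1+k))) := by
    rw [← Finset.Ico_add_one_right_eq_Icc, Finset.sum_Ico_eq_sum_range, Nat.add_sub_cancel]
  rw [show (∑ k ∈ Finset.range c,
      (-((a.factorial:ℚ)⁻¹ * ((b.factorial:ℚ)⁻¹ * (c.factorial:ℚ)⁻¹) * gam a c (k+1)))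
        • (Γ.f^(a-(k+1)) * Γ.Bp (b+(k+1)) * Γ.e^(c-(k+1))))
      = ∑ k ∈ Finset.range c,
        (-((a.factorial:ℚ)⁻¹ * ((b.factorial:ℚ)⁻¹ * (c.factorial:ℚ)⁻¹) * gam a c (1+k)))
          • (Γ.f^(a-(1+k)) * Γ.Bp (b+(1+k)) * Γ.e^(c-(1+k)))
    from Finset.sum_congr rfl (fun k _ => by rw [Nat.add_comm 1 k])]
  rw [← hIcc]
  -- shrink to Icc 1 (min a c)
  rw [show (∑ k ∈ Finset.Icc 1 c,
      (-((a.factorial:ℚ)⁻¹ * ((b.factorial:ℚ)⁻¹ * (c.factorial:ℚ)⁻¹) * gam a c k))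
        • (Γ.f^(a-k) * Γ.Bp (b+k) * Γ.e^(c-k)))
      = ∑ k ∈ Finset.Icc 1 (min a c),
        (-((a.factorial:ℚ)⁻¹ * ((b.factorial:ℚ)⁻¹ * (c.factorial:ℚ)⁻¹) * gam a c k))
          • (Γ.f^(a-k) * Γ.Bp (b+k) * Γ.e^(c-k))
    from (Finset.sum_subset
      (by
        intro x hx
        simp only [Finset.mem_Icc] at *
        omega)
      (by
        intro x hx hnx
        simp only [Finset.mem_Icc] at hx hnx
        have hax : a < x := by omega
        rw [gam_eq_zero_left hax]
        simp)).symm]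
  -- termwise comparison
  apply Finset.sum_congr rfl
  intro k hk
  simp only [Finset.mem_Icc] at hk
  have hka : k ≤ a := by omega
  have hkc : k ≤ c := by omega
  have hk1 : 1 ≤ k := hk.1
  congr 1
  -- scalar identity
  obtain ⟨m, rfl⟩ : ∃ m, k = m + 1 := ⟨k - 1, by omega⟩
  simp only [gam, Nat.add_sub_cancel]
  rw [Nat.cast_choose ℚ hka, Nat.cast_choose ℚ hkc,
    Nat.cast_choose ℚ (Nat.le_add_left (m+1) b)]
  have e1 : b + (m+1) - (m+1) = b := by omega
  rw [e1]
  have nz : ∀ n : ℕ, ((n.factorial:ℚ)) ≠ 0 :=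
    fun n => Nat.cast_ne_zero.mpr (Nat.factorial_ne_zero n)
  have npow : (-1:ℚ)^(m+1) = -(-1:ℚ)^m := by rw [pow_succ]; ring
  field_simp
  ring
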